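/- Let g be a nilpotent real Lie algebra of dimension 2p+1 (p ≥ 1) admitting a contact form ω. Then the center Z(g) of g is exactly one-dimensional. -/

import Mathlib

/-- Let `g` be a nilpotent real Lie algebra of dimension `2p+1` (`p ≥ 1`)
admitting a contact form `ω`.  Then the center `Z(g)` is exactly one-dimensional. -/
theorem finrank_center_eq_one_of_contact_nilpotent
    (L : Type*) [LieRing L] [LieAlgebra ℝ L] [FiniteDimensional ℝ L]
    [LieRing.IsNilpotent L]
    (p : ℕ) (hp : 1 ≤ p) (hdim : Module.finrank ℝ L = 2 * p + 1)
    (ω : L →ₗ[ℝ] ℝ) (hω : ω ≠ 0)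
    (hcontact : ∀ X : L, ω X = 0 → (∀ Y : L, ω Y = 0 → ω ⁅X, Y⁆ = 0) → X = 0) :
    Module.finrank ℝ (LieAlgebra.center ℝ L) = 1 := by
  have hLnt : Nontrivial L := by
    apply Module.nontrivial_of_finrank_pos (R := ℝ)
    omega
  have hnt : Nontrivial (LieAlgebra.center ℝ L) :=
    LieAlgebra.non_trivial_center_of_isNilpotent (R := ℝ) (L := L)
  -- ω restricted to the center is injective
  have hinj : Function.Injective (ω.comp ((LieAlgebra.center ℝ L).toSubmodule.subtype)) := by
    rw [← LinearMap.ker_eq_bot, LinearMap.ker_eq_bot']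
    rintro ⟨z, hz⟩ h0
    have hz' : ∀ Y : L, ⁅z, Y⁆ = 0 := by
      intro Y
      rw [← lie_skew, hz Y, neg_zero]
    have : z = 0 := by
      apply hcontact z h0
      intro Y _
      rw [hz' Y]
      simp
    exact Subtype.ext this
  have hle : Module.finrank ℝ (LieAlgebra.center ℝ L) ≤ 1 := by
    have := LinearMap.finrank_le_finrank_of_injective hinj
    simp at this
    exact this
  have hpos : 0 < Module.finrank ℝ (LieAlgebra.center ℝ L) :=
    Module.finrank_pos
  omega
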